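/- Suppose Φ is 𝒟-pullback asymptotically compact in X. Let D ∈ 𝒟 be a family with each D(ω₁,ω₂) closed in X, and suppose that for every ω₁ ∈ Ω₁ and ω₂ ∈ Ω₂ there exists t₀ = t₀(D,ω₁,ω₂) ≥ 0 such that Φ(t,θ₁(−t)ω₁,θ₂(−t)ω₂,D(θ₁(−t)ω₁,θ₂(−t)ω₂)) ⊆ D(ω₁,ω₂) for all t ≥ t₀. Then the Ω-limit set family Ω(D) is invariant under Φ, i.e. Φ(t,ω₁,ω₂,Ω(D,ω₁,ω₂)) = Ω(D,θ₁(t)ω₁,θ₂(t)ω₂) for all t ≥ 0, and moreover Ω(D,ω₁,ω₂) ⊆ D(ω₁,ω₂) for all ω₁ ∈ Ω₁ and ω₂ ∈ Ω₂. -/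

import Mathlib

open MeasureTheory Filter Set Topology
open scoped ENNReal

namespace RDS

/-- A group of transformations of `α` parametrized by `ℝ`. -/
def IsGroupAction {α : Type*} (θ : ℝ → α → α) : Prop :=
  (∀ a, θ 0 a = a) ∧ ∀ s t : ℝ, ∀ a, θ (s + t) a = θ t (θ s a)

variable {Ω₁ Ω₂ X : Type*} [MetricSpace X] [MeasurableSpace X] [MeasurableSpace Ω₂]

/-- A continuous cocycle on `X` over the parametric dynamical systems
`(Ω₁, θ₁)` and `(Ω₂, ℱ₂, P, θ₂)` (Definition 2.1). -/
structure IsCocycle (θ₁ : ℝ → Ω₁ → Ω₁) (θ₂ : ℝ → Ω₂ → Ω₂)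
    (Φ : ℝ → Ω₁ → Ω₂ → X → X) : Prop where
  measurable : ∀ ω₁ : Ω₁,
    Measurable fun p : {t : ℝ // 0 ≤ t} × Ω₂ × X => Φ p.1.1 ω₁ p.2.1 p.2.2
  map_zero : ∀ (ω₁ : Ω₁) (ω₂ : Ω₂) (x : X), Φ 0 ω₁ ω₂ x = x
  cocycle : ∀ t τ : ℝ, 0 ≤ t → 0 ≤ τ → ∀ (ω₁ : Ω₁) (ω₂ : Ω₂) (x : X),
    Φ (t + τ) ω₁ ω₂ x = Φ t (θ₁ τ ω₁) (θ₂ τ ω₂) (Φ τ ω₁ ω₂ x)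
  continuous : ∀ t : ℝ, 0 ≤ t → ∀ (ω₁ : Ω₁) (ω₂ : Ω₂),
    Continuous fun x : X => Φ t ω₁ ω₂ x

/-- A complete orbit of the cocycle `Φ` (Definition 2.9). -/
def IsCompleteOrbit (θ₁ : ℝ → Ω₁ → Ω₁) (θ₂ : ℝ → Ω₂ → Ω₂)
    (Φ : ℝ → Ω₁ → Ω₂ → X → X) (ψ : ℝ → Ω₁ → Ω₂ → X) : Prop :=
  ∀ t τ : ℝ, 0 ≤ t → ∀ (ω₁ : Ω₁) (ω₂ : Ω₂),
    Φ t (θ₁ τ ω₁) (θ₂ τ ω₂) (ψ τ ω₁ ω₂) = ψ (t + τ) ω₁ ω₂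

/-- A `𝒟`-complete orbit of `Φ`. -/
def IsDCompleteOrbit (θ₁ : ℝ → Ω₁ → Ω₁) (θ₂ : ℝ → Ω₂ → Ω₂)
    (Φ : ℝ → Ω₁ → Ω₂ → X → X) (𝒟 : Set (Ω₁ → Ω₂ → Set X))
    (ψ : ℝ → Ω₁ → Ω₂ → X) : Prop :=
  IsCompleteOrbit θ₁ θ₂ Φ ψ ∧
    ∃ D ∈ 𝒟, ∀ (t : ℝ) (ω₁ : Ω₁) (ω₂ : Ω₂), ψ t ω₁ ω₂ ∈ D (θ₁ t ω₁) (θ₂ t ω₂)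

/-- Positive invariance of a family under `Φ`. -/
def PositivelyInvariant (θ₁ : ℝ → Ω₁ → Ω₁) (θ₂ : ℝ → Ω₂ → Ω₂)
    (Φ : ℝ → Ω₁ → Ω₂ → X → X) (B : Ω₁ → Ω₂ → Set X) : Prop :=
  ∀ t : ℝ, 0 ≤ t → ∀ (ω₁ : Ω₁) (ω₂ : Ω₂),
    Φ t ω₁ ω₂ '' B ω₁ ω₂ ⊆ B (θ₁ t ω₁) (θ₂ t ω₂)

/-- Invariance of a family under `Φ`. -/
def Invariant (θ₁ : ℝ → Ω₁ → Ω₁) (θ₂ : ℝ → Ω₂ → Ω₂)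
    (Φ : ℝ → Ω₁ → Ω₂ → X → X) (B : Ω₁ → Ω₂ → Set X) : Prop :=
  ∀ t : ℝ, 0 ≤ t → ∀ (ω₁ : Ω₁) (ω₂ : Ω₂),
    Φ t ω₁ ω₂ '' B ω₁ ω₂ = B (θ₁ t ω₁) (θ₂ t ω₂)

/-- Quasi-invariance of a family under `Φ`. -/
def QuasiInvariant (θ₁ : ℝ → Ω₁ → Ω₁) (θ₂ : ℝ → Ω₂ → Ω₂)
    (Φ : ℝ → Ω₁ → Ω₂ → X → X) (B : Ω₁ → Ω₂ → Set X) : Prop :=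
  ∀ y : Ω₁ → Ω₂ → X, (∀ (ω₁ : Ω₁) (ω₂ : Ω₂), y ω₁ ω₂ ∈ B ω₁ ω₂) →
    ∃ ψ : ℝ → Ω₁ → Ω₂ → X, IsCompleteOrbit θ₁ θ₂ Φ ψ ∧
      (∀ (ω₁ : Ω₁) (ω₂ : Ω₂), ψ 0 ω₁ ω₂ = y ω₁ ω₂) ∧
      ∀ (t : ℝ) (ω₁ : Ω₁) (ω₂ : Ω₂), ψ t ω₁ ω₂ ∈ B (θ₁ t ω₁) (θ₂ t ω₂)

/-- The Ω-limit set of a family `B` (Definition 2.13). -/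
def omegaLimit (θ₁ : ℝ → Ω₁ → Ω₁) (θ₂ : ℝ → Ω₂ → Ω₂)
    (Φ : ℝ → Ω₁ → Ω₂ → X → X) (B : Ω₁ → Ω₂ → Set X) (ω₁ : Ω₁) (ω₂ : Ω₂) : Set X :=
  ⋂ τ ∈ Ici (0 : ℝ), closure (⋃ t ∈ Ici τ,
    Φ t (θ₁ (-t) ω₁) (θ₂ (-t) ω₂) '' B (θ₁ (-t) ω₁) (θ₂ (-t) ω₂))

/-- `𝒟` is a collection of families of nonempty subsets of `X`. -/
def FamiliesOfNonemptySets (𝒟 : Set (Ω₁ → Ω₂ → Set X)) : Prop :=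
  ∀ D ∈ 𝒟, ∀ (ω₁ : Ω₁) (ω₂ : Ω₂), (D ω₁ ω₂).Nonempty

/-- Neighborhood closedness of the collection `𝒟` (Definition 2.5). -/
def NeighborhoodClosed (𝒟 : Set (Ω₁ → Ω₂ → Set X)) : Prop :=
  ∀ D ∈ 𝒟, ∃ ε : ℝ, 0 < ε ∧ ∀ B : Ω₁ → Ω₂ → Set X,
    (∀ (ω₁ : Ω₁) (ω₂ : Ω₂), (B ω₁ ω₂).Nonempty ∧
      B ω₁ ω₂ ⊆ Metric.thickening ε (D ω₁ ω₂)) → B ∈ 𝒟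

/-- Inclusion closedness of the collection `𝒟`. -/
def InclusionClosed (𝒟 : Set (Ω₁ → Ω₂ → Set X)) : Prop :=
  ∀ D ∈ 𝒟, ∀ B : Ω₁ → Ω₂ → Set X,
    (∀ (ω₁ : Ω₁) (ω₂ : Ω₂), (B ω₁ ω₂).Nonempty ∧ B ω₁ ω₂ ⊆ D ω₁ ω₂) → B ∈ 𝒟

/-- `𝒟`-pullback asymptotic compactness of `Φ` (Definition 2.16). -/
def AsymptoticallyCompact (θ₁ : ℝ → Ω₁ → Ω₁) (θ₂ : ℝ → Ω₂ → Ω₂)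
    (Φ : ℝ → Ω₁ → Ω₂ → X → X) (𝒟 : Set (Ω₁ → Ω₂ → Set X)) : Prop :=
  ∀ (ω₁ : Ω₁) (ω₂ : Ω₂), ∀ B ∈ 𝒟, ∀ (t : ℕ → ℝ) (x : ℕ → X),
    Tendsto t atTop atTop →
    (∀ n, x n ∈ B (θ₁ (-t n) ω₁) (θ₂ (-t n) ω₂)) →
    ∃ (φ : ℕ → ℕ) (y : X), StrictMono φ ∧
      Tendsto (fun n => Φ (t (φ n)) (θ₁ (-t (φ n)) ω₁) (θ₂ (-t (φ n)) ω₂) (x (φ n)))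
        atTop (𝓝 y)

/-- The Hausdorff semi-metric `d(C,B) = sup_{x ∈ C} inf_{b ∈ B} d(x,b)`,
valued in `ℝ≥0∞`. -/
noncomputable def hausSemidist (C B : Set X) : ℝ≥0∞ :=
  ⨆ x ∈ C, EMetric.infEdist x B

/-- The family `A` pullback attracts the family `B` under `Φ`. -/
def Attracts (θ₁ : ℝ → Ω₁ → Ω₁) (θ₂ : ℝ → Ω₂ → Ω₂)
    (Φ : ℝ → Ω₁ → Ω₂ → X → X) (B A : Ω₁ → Ω₂ → Set X) : Prop :=
  ∀ (ω₁ : Ω₁) (ω₂ : Ω₂),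
    Tendsto (fun t : ℝ => hausSemidist
        (Φ t (θ₁ (-t) ω₁) (θ₂ (-t) ω₂) '' B (θ₁ (-t) ω₁) (θ₂ (-t) ω₂)) (A ω₁ ω₂))
      atTop (𝓝 0)

/-- A `𝒟`-pullback absorbing set for `Φ` (Definition 2.15). -/
def IsAbsorbingSet (θ₁ : ℝ → Ω₁ → Ω₁) (θ₂ : ℝ → Ω₂ → Ω₂)
    (Φ : ℝ → Ω₁ → Ω₂ → X → X) (𝒟 : Set (Ω₁ → Ω₂ → Set X))
    (K : Ω₁ → Ω₂ → Set X) : Prop :=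
  K ∈ 𝒟 ∧ ∀ (ω₁ : Ω₁) (ω₂ : Ω₂), ∀ B ∈ 𝒟, ∃ T : ℝ, 0 < T ∧ ∀ t : ℝ, T ≤ t →
    Φ t (θ₁ (-t) ω₁) (θ₂ (-t) ω₂) '' B (θ₁ (-t) ω₁) (θ₂ (-t) ω₂) ⊆ K ω₁ ω₂

/-- A closed measurable (w.r.t. the `P`-completion of `ℱ₂`) `𝒟`-pullback
absorbing set for `Φ`. -/
def IsClosedMeasurableAbsorbingSet (θ₁ : ℝ → Ω₁ → Ω₁) (θ₂ : ℝ → Ω₂ → Ω₂)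
    (Φ : ℝ → Ω₁ → Ω₂ → X → X) (P : Measure Ω₂) (𝒟 : Set (Ω₁ → Ω₂ → Set X))
    (K : Ω₁ → Ω₂ → Set X) : Prop :=
  IsAbsorbingSet θ₁ θ₂ Φ 𝒟 K ∧
    (∀ (ω₁ : Ω₁) (ω₂ : Ω₂), IsClosed (K ω₁ ω₂) ∧ (K ω₁ ω₂).Nonempty) ∧
    ∀ (ω₁ : Ω₁) (x : X), NullMeasurable (fun ω₂ => Metric.infDist x (K ω₁ ω₂)) P

/-- A `𝒟`-pullback attractor for `Φ` (Definition 2.17). -/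
structure IsPullbackAttractor (θ₁ : ℝ → Ω₁ → Ω₁) (θ₂ : ℝ → Ω₂ → Ω₂)
    (Φ : ℝ → Ω₁ → Ω₂ → X → X) (P : Measure Ω₂) (𝒟 : Set (Ω₁ → Ω₂ → Set X))
    (A : Ω₁ → Ω₂ → Set X) : Prop where
  mem : A ∈ 𝒟
  compact : ∀ (ω₁ : Ω₁) (ω₂ : Ω₂), IsCompact (A ω₁ ω₂)
  measurable : ∀ (ω₁ : Ω₁) (x : X),
    NullMeasurable (fun ω₂ => Metric.infDist x (A ω₁ ω₂)) P
  invariant : Invariant θ₁ θ₂ Φ A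
  attracts : ∀ B ∈ 𝒟, Attracts θ₁ θ₂ Φ B A

lemma act_shift {α : Type*} {θ : ℝ → α → α} (h : IsGroupAction θ) (a b : ℝ) (ω : α) :
    θ b (θ a ω) = θ (a + b) ω := (h.2 a b ω).symm

lemma mem_omegaLimit_of_seq {Ω₁ Ω₂ X : Type*} [MetricSpace X]
    (θ₁ : ℝ → Ω₁ → Ω₁) (θ₂ : ℝ → Ω₂ → Ω₂) (Φ : ℝ → Ω₁ → Ω₂ → X → X)
    (D : Ω₁ → Ω₂ → Set X) (ω₁ : Ω₁) (ω₂ : Ω₂) {y : X}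
    (t : ℕ → ℝ) (x : ℕ → X) (ht : Tendsto t atTop atTop)
    (hx : ∀ n, x n ∈ D (θ₁ (-t n) ω₁) (θ₂ (-t n) ω₂))
    (hconv : Tendsto (fun n => Φ (t n) (θ₁ (-t n) ω₁) (θ₂ (-t n) ω₂) (x n))
      atTop (𝓝 y)) :
    y ∈ omegaLimit θ₁ θ₂ Φ D ω₁ ω₂ := by
  refine mem_iInter₂.2 fun τ hτ => ?_
  refine mem_closure_of_tendsto hconv ?_
  filter_upwards [ht.eventually_ge_atTop τ] with n hn
  exact mem_iUnion₂.2 ⟨t n, hn, mem_image_of_mem _ (hx n)⟩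

lemma exists_seq_of_mem_omegaLimit {Ω₁ Ω₂ X : Type*} [MetricSpace X]
    (θ₁ : ℝ → Ω₁ → Ω₁) (θ₂ : ℝ → Ω₂ → Ω₂) (Φ : ℝ → Ω₁ → Ω₂ → X → X)
    (D : Ω₁ → Ω₂ → Set X) (ω₁ : Ω₁) (ω₂ : Ω₂) {y : X}
    (hy : y ∈ omegaLimit θ₁ θ₂ Φ D ω₁ ω₂) :
    ∃ (t : ℕ → ℝ) (x : ℕ → X), (∀ n : ℕ, (n : ℝ) ≤ t n) ∧
      Tendsto t atTop atTop ∧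
      (∀ n, x n ∈ D (θ₁ (-t n) ω₁) (θ₂ (-t n) ω₂)) ∧
      Tendsto (fun n => Φ (t n) (θ₁ (-t n) ω₁) (θ₂ (-t n) ω₂) (x n))
        atTop (𝓝 y) := by
  have key : ∀ n : ℕ, ∃ (t : ℝ) (x : X), (n : ℝ) ≤ t ∧
      x ∈ D (θ₁ (-t) ω₁) (θ₂ (-t) ω₂) ∧
      dist (Φ t (θ₁ (-t) ω₁) (θ₂ (-t) ω₂) x) y < 1 / (n + 1) := by
    intro n
    have h1 : y ∈ closure (⋃ t ∈ Ici (n : ℝ),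
        Φ t (θ₁ (-t) ω₁) (θ₂ (-t) ω₂) '' D (θ₁ (-t) ω₁) (θ₂ (-t) ω₂)) :=
      mem_iInter₂.1 hy (n : ℝ) (mem_Ici.2 (Nat.cast_nonneg n))
    rw [Metric.mem_closure_iff] at h1
    obtain ⟨b, hb, hbd⟩ := h1 (1 / (n + 1)) (by positivity)
    obtain ⟨t, ht, hbt⟩ := mem_iUnion₂.1 hb
    obtain ⟨x, hx, rfl⟩ := hbt
    exact ⟨t, x, ht, hx, by rwa [dist_comm]⟩
  choose t x ht hx hd using key
  refine ⟨t, x, ht, tendsto_atTop_mono ht tendsto_natCast_atTop_atTop, hx, ?_⟩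
  rw [tendsto_iff_dist_tendsto_zero]
  exact squeeze_zero (fun n => dist_nonneg) (fun n => (hd n).le)
    tendsto_one_div_add_atTop_nhds_zero_nat

theorem omegaLimit_invariant
    {Ω₁ Ω₂ X : Type*} [Nonempty Ω₁]
    [MetricSpace X] [CompleteSpace X] [SecondCountableTopology X]
    [MeasurableSpace X] [BorelSpace X]
    [MeasurableSpace Ω₂] (P : Measure Ω₂) [IsProbabilityMeasure P]
    (θ₁ : ℝ → Ω₁ → Ω₁) (θ₂ : ℝ → Ω₂ → Ω₂)
    (hθ₁ : IsGroupAction θ₁) (hθ₂ : IsGroupAction θ₂)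
    (hθ₂meas : Measurable fun p : ℝ × Ω₂ => θ₂ p.1 p.2)
    (hθ₂pres : ∀ t : ℝ, MeasurePreserving (θ₂ t) P P)
    (Φ : ℝ → Ω₁ → Ω₂ → X → X)
    (hΦ : IsCocycle θ₁ θ₂ Φ)
    (𝒟 : Set (Ω₁ → Ω₂ → Set X))
    (h𝒟ne : FamiliesOfNonemptySets 𝒟)
    (hac : AsymptoticallyCompact θ₁ θ₂ Φ 𝒟)
    (D : Ω₁ → Ω₂ → Set X) (hD : D ∈ 𝒟)
    (hDcl : ∀ (ω₁ : Ω₁) (ω₂ : Ω₂), IsClosed (D ω₁ ω₂))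
    (habs : ∀ (ω₁ : Ω₁) (ω₂ : Ω₂), ∃ t₀ : ℝ, 0 ≤ t₀ ∧ ∀ t : ℝ, t₀ ≤ t →
      Φ t (θ₁ (-t) ω₁) (θ₂ (-t) ω₂) '' D (θ₁ (-t) ω₁) (θ₂ (-t) ω₂) ⊆ D ω₁ ω₂) :
    Invariant θ₁ θ₂ Φ (fun ω₁ ω₂ => omegaLimit θ₁ θ₂ Φ D ω₁ ω₂) ∧
      ∀ (ω₁ : Ω₁) (ω₂ : Ω₂), omegaLimit θ₁ θ₂ Φ D ω₁ ω₂ ⊆ D ω₁ ω₂ := by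
  constructor
  · intro t ht ω₁ ω₂
    apply Subset.antisymm
    · -- forward inclusion
      rintro _ ⟨y, hy, rfl⟩
      obtain ⟨s, x, hs0, hsT, hx, hconv⟩ :=
        exists_seq_of_mem_omegaLimit θ₁ θ₂ Φ D ω₁ ω₂ hy
      have hsnn : ∀ n, (0 : ℝ) ≤ s n := fun n => (Nat.cast_nonneg n).trans (hs0 n)
      have e1 : ∀ n, θ₁ (-(t + s n)) (θ₁ t ω₁) = θ₁ (-s n) ω₁ := by
        intro n; rw [act_shift hθ₁]; congr 1; ring
      have e2 : ∀ n, θ₂ (-(t + s n)) (θ₂ t ω₂) = θ₂ (-s n) ω₂ := by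
        intro n; rw [act_shift hθ₂]; congr 1; ring
      refine mem_omegaLimit_of_seq θ₁ θ₂ Φ D (θ₁ t ω₁) (θ₂ t ω₂)
        (fun n => t + s n) x ?_ ?_ ?_
      · exact tendsto_atTop_add_const_left atTop t hsT
      · intro n; rw [e1, e2]; exact hx n
      · have heq : ∀ n, Φ (t + s n) (θ₁ (-(t + s n)) (θ₁ t ω₁))
            (θ₂ (-(t + s n)) (θ₂ t ω₂)) (x n)
            = Φ t ω₁ ω₂ (Φ (s n) (θ₁ (-s n) ω₁) (θ₂ (-s n) ω₂) (x n)) := by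
          intro n
          rw [e1, e2, hΦ.cocycle t (s n) ht (hsnn n), act_shift hθ₁, act_shift hθ₂,
            neg_add_cancel, hθ₁.1, hθ₂.1]
        rw [show (fun n => Φ (t + s n) (θ₁ (-(t + s n)) (θ₁ t ω₁))
            (θ₂ (-(t + s n)) (θ₂ t ω₂)) (x n))
            = fun n => Φ t ω₁ ω₂ (Φ (s n) (θ₁ (-s n) ω₁) (θ₂ (-s n) ω₂) (x n))
          from funext heq]
        exact ((hΦ.continuous t ht ω₁ ω₂).tendsto y).comp hconv
    · -- reverse inclusion
      intro y hy
      obtain ⟨s, x, hs0, hsT, hx, hconv⟩ :=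
        exists_seq_of_mem_omegaLimit θ₁ θ₂ Φ D (θ₁ t ω₁) (θ₂ t ω₂) hy
      obtain ⟨N, hN⟩ := (hsT.eventually (eventually_ge_atTop t)).exists_forall_of_atTop
      set s' : ℕ → ℝ := fun n => s (n + N) with hs'
      set x' : ℕ → X := fun n => x (n + N) with hx'
      set σ : ℕ → ℝ := fun n => s' n - t with hσdef
      have hσnn : ∀ n, (0 : ℝ) ≤ σ n := fun n => sub_nonneg.2 (hN (n + N) (Nat.le_add_left N n))
      have hσT : Tendsto σ atTop atTop := by
        have : Tendsto s' atTop atTop := hsT.comp (tendsto_add_atTop_nat N)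
        simpa [hσdef, sub_eq_add_neg] using tendsto_atTop_add_const_right atTop (-t) this
      have e1 : ∀ n, θ₁ (-s' n) (θ₁ t ω₁) = θ₁ (-σ n) ω₁ := by
        intro n; rw [act_shift hθ₁]; congr 1; simp [hσdef]; ring
      have e2 : ∀ n, θ₂ (-s' n) (θ₂ t ω₂) = θ₂ (-σ n) ω₂ := by
        intro n; rw [act_shift hθ₂]; congr 1; simp [hσdef]; ring
      have hxσ : ∀ n, x' n ∈ D (θ₁ (-σ n) ω₁) (θ₂ (-σ n) ω₂) := by
        intro n; rw [← e1, ← e2]; exact hx (n + N)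
      obtain ⟨φ, z, hφ, hz⟩ := hac ω₁ ω₂ D hD σ x' hσT hxσ
      have hzΩ : z ∈ omegaLimit θ₁ θ₂ Φ D ω₁ ω₂ :=
        mem_omegaLimit_of_seq θ₁ θ₂ Φ D ω₁ ω₂ (σ ∘ φ) (x' ∘ φ)
          (hσT.comp hφ.tendsto_atTop) (fun n => hxσ (φ n)) hz
      refine ⟨z, hzΩ, ?_⟩
      -- Φ t ω₁ ω₂ z = y by uniqueness of limits
      have hlim1 : Tendsto (fun n => Φ t ω₁ ω₂
          (Φ (σ (φ n)) (θ₁ (-σ (φ n)) ω₁) (θ₂ (-σ (φ n)) ω₂) (x' (φ n))))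
          atTop (𝓝 (Φ t ω₁ ω₂ z)) :=
        ((hΦ.continuous t ht ω₁ ω₂).tendsto z).comp hz
      have heq : ∀ n, Φ t ω₁ ω₂
          (Φ (σ (φ n)) (θ₁ (-σ (φ n)) ω₁) (θ₂ (-σ (φ n)) ω₂) (x' (φ n)))
          = Φ (s' (φ n)) (θ₁ (-s' (φ n)) (θ₁ t ω₁)) (θ₂ (-s' (φ n)) (θ₂ t ω₂))
            (x' (φ n)) := by
        intro n
        rw [e1, e2]
        have hs'eq : s' (φ n) = t + σ (φ n) := by simp [hσdef]
        rw [hs'eq, hΦ.cocycle t (σ (φ n)) ht (hσnn (φ n)), act_shift hθ₁,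
          act_shift hθ₂, neg_add_cancel, hθ₁.1, hθ₂.1]
      rw [show (fun n => Φ t ω₁ ω₂
          (Φ (σ (φ n)) (θ₁ (-σ (φ n)) ω₁) (θ₂ (-σ (φ n)) ω₂) (x' (φ n))))
          = fun n => Φ (s' (φ n)) (θ₁ (-s' (φ n)) (θ₁ t ω₁))
            (θ₂ (-s' (φ n)) (θ₂ t ω₂)) (x' (φ n)) from funext heq] at hlim1
      have hlim2 : Tendsto (fun n => Φ (s' (φ n)) (θ₁ (-s' (φ n)) (θ₁ t ω₁))
          (θ₂ (-s' (φ n)) (θ₂ t ω₂)) (x' (φ n))) atTop (𝓝 y) := by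
        have := hconv.comp ((tendsto_add_atTop_nat N).comp hφ.tendsto_atTop)
        exact this
      exact tendsto_nhds_unique hlim1 hlim2
  · -- Ω(D) ⊆ D
    intro ω₁ ω₂ y hy
    obtain ⟨t₀, ht₀, habs'⟩ := habs ω₁ ω₂
    have h1 : y ∈ closure (⋃ t ∈ Ici t₀,
        Φ t (θ₁ (-t) ω₁) (θ₂ (-t) ω₂) '' D (θ₁ (-t) ω₁) (θ₂ (-t) ω₂)) :=
      mem_iInter₂.1 hy t₀ (mem_Ici.2 ht₀)
    have h2 : (⋃ t ∈ Ici t₀,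
        Φ t (θ₁ (-t) ω₁) (θ₂ (-t) ω₂) '' D (θ₁ (-t) ω₁) (θ₂ (-t) ω₂)) ⊆ D ω₁ ω₂ :=
      iUnion₂_subset fun t htt => habs' t htt
    exact closure_minimal h2 (hDcl ω₁ ω₂) h1


end RDS
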